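/- The q-Bell number b_q(n) (number of direct sum decompositions of F_q^n into nonzero subspaces) equals Σ_{k=1}^{n} (1/k!) Σ_{n_1+⋯+n_k=n, n_i≥1} γ_n/(γ_{n_1}⋯γ_{n_k}). -/

import Mathlib

/-- The order of `GL_m(F_q)`. -/
def gma (q m : ℕ) : ℕ := ∏ i ∈ Finset.range m, (q ^ m - q ^ i)

/-- The `q`-Bell number: the number of direct sum decompositions of `F_q^n` into
nonzero subspaces. -/
noncomputable def qBell (n : ℕ) (F : Type) [Field F] [Fintype F] : ℕ :=
  Nat.card {D : Finset (Submodule F (Fin n → F)) //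
    (∀ V ∈ D, V ≠ ⊥) ∧
    sSupIndep (D : Set (Submodule F (Fin n → F))) ∧
    sSup (D : Set (Submodule F (Fin n → F))) = ⊤}


open Finset Module Submodule

lemma nat_card_eq_sum_fibers {α β : Type*} [Finite α] (f : α → β) (B : Finset β)
    (h : ∀ a, f a ∈ B) : Nat.card α = ∑ b ∈ B, Nat.card {a // f a = b} := by
  classical
  have := Fintype.ofFinite α
  rw [Nat.card_eq_fintype_card, ← Finset.card_univ,
    Finset.card_eq_sum_card_fiberwise (fun a _ => h a)]
  refine Finset.sum_congr rfl fun b _ => ?_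
  rw [Nat.card_eq_fintype_card, Fintype.card_subtype]

variable {F : Type} [Field F] [Fintype F]

lemma card_linearEquiv (m : ℕ) :
    Nat.card ((Fin m → F) ≃ₗ[F] (Fin m → F)) = gma (Fintype.card F) m := by
  rw [← Nat.card_congr ((Matrix.GeneralLinearGroup.toLin.trans
    (LinearMap.GeneralLinearGroup.generalLinearEquiv F (Fin m → F))).toEquiv),
    Matrix.card_GL_field, gma, ← Fin.prod_univ_eq_prod_range]

lemma nat_card_basis {W : Type*} [AddCommGroup W] [Module F W] [FiniteDimensional F W]
    {ι : Type*} [Fintype ι] (h : Fintype.card ι = finrank F W) :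
    Nat.card (Basis ι F W) = gma (Fintype.card F) (finrank F W) := by
  obtain ⟨eW⟩ : Nonempty ((Fin (finrank F W) → F) ≃ₗ[F] W) :=
    FiniteDimensional.nonempty_linearEquiv_of_finrank_eq (by simp)
  have eI : Fin (finrank F W) ≃ ι := (Fintype.equivFinOfCardEq h).symm
  let eι : (ι →₀ F) ≃ₗ[F] (Fin (finrank F W) → F) :=
    (Finsupp.linearEquivFunOnFinite F F ι).trans (LinearEquiv.funCongrLeft F F eI)
  let e1 : Basis ι F W ≃ (W ≃ₗ[F] (ι →₀ F)) :=
    ⟨fun b => b.repr, Basis.ofRepr, fun b => by cases b; rfl, fun r => rfl⟩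
  let e2 : (W ≃ₗ[F] (ι →₀ F)) ≃ ((Fin (finrank F W) → F) ≃ₗ[F] (Fin (finrank F W) → F)) :=
    ⟨fun g => (eW.trans g).trans eι, fun g => (eW.symm.trans g).trans eι.symm,
     fun g => by ext x; simp, fun g => by ext x; simp⟩
  rw [Nat.card_congr (e1.trans e2), card_linearEquiv]

lemma card_decomp (n k : ℕ) (c : Fin k → ℕ) (hsum : ∑ i, c i = n) :
    Nat.card {D : Fin k → Submodule F (Fin n → F) //
        iSupIndep D ∧ iSup D = ⊤ ∧ ∀ i, finrank F (D i) = c i}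
      * ∏ i, gma (Fintype.card F) (c i) = gma (Fintype.card F) n := by
  classical
  set M := (Fin n → F)
  have hfinM : Finite (Submodule F M) := Finite.of_injective _ SetLike.coe_injective
  have hfinB : Finite (Basis ((i : Fin k) × Fin (c i)) F M) :=
    Finite.of_injective _ (DFunLike.coe_injective)
  set P : (Fin k → Submodule F M) → Prop :=
    fun D => iSupIndep D ∧ iSup D = ⊤ ∧ ∀ i, finrank F (D i) = c i with hP
  set B : Finset (Fin k → Submodule F M) := Finset.univ.filter P with hB
  -- block span
  set bs : Basis ((i : Fin k) × Fin (c i)) F M → (Fin k → Submodule F M) :=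
    fun b i => span F (Set.range fun j : Fin (c i) => b ⟨i, j⟩) with hbs
  have hrange : ∀ (b : Basis ((i : Fin k) × Fin (c i)) F M) (i : Fin k),
      (Set.range fun j : Fin (c i) => b ⟨i, j⟩) = b '' (Sigma.fst ⁻¹' {i}) := by
    intro b i
    ext x
    constructor
    · rintro ⟨j, rfl⟩; exact ⟨⟨i, j⟩, rfl, rfl⟩
    · rintro ⟨⟨i', j⟩, hi, rfl⟩
      cases hi; exact ⟨j, rfl⟩
  have hmem : ∀ b : Basis ((i : Fin k) × Fin (c i)) F M, bs b ∈ B := by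
    intro b
    have hli : ∀ i, LinearIndependent F (fun j : Fin (c i) => b ⟨i, j⟩) :=
      fun i => b.linearIndependent.comp _ sigma_mk_injective
    refine Finset.mem_filter.2 ⟨Finset.mem_univ _, ?_, ?_, ?_⟩
    · rw [iSupIndep_def]
      intro i
      have h1 : bs b i ≤ span F (b '' (Sigma.fst ⁻¹' {i})) :=
        (congrArg (span F) (hrange b i)).le
      have h2 : (⨆ j, ⨆ _ : j ≠ i, bs b j) ≤ span F (b '' {p : (i : Fin k) × Fin (c i) | p.1 ≠ i}) := by
        refine iSup₂_le fun j hj => ?_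
        refine (congrArg (span F) (hrange b j)).le.trans ?_
        exact span_mono (Set.image_mono (by rintro ⟨j', a⟩ h; cases h; exact hj))
      refine Disjoint.mono h1 h2 (b.linearIndependent.disjoint_span_image ?_)
      rw [Set.disjoint_left]
      rintro ⟨i', j⟩ hi hni
      cases hi
      exact hni rfl
    · show (⨆ i, span F (Set.range fun j : Fin (c i) => b ⟨i, j⟩)) = ⊤
      rw [iSup_span, ← Set.range_sigma_eq_iUnion_range, b.span_eq]
    · intro i
      show finrank F ↥(span F (Set.range fun j : Fin (c i) => b ⟨i, j⟩)) = c i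
      rw [finrank_span_eq_card (hli i), Fintype.card_fin]
  -- total count
  have htot : Nat.card (Basis ((i : Fin k) × Fin (c i)) F M) = gma (Fintype.card F) n := by
    have h1 : Fintype.card ((i : Fin k) × Fin (c i)) = finrank F M := by
      simp [Fintype.card_sigma, hsum, M, Module.finrank_fintype_fun_eq_card]
    rw [nat_card_basis h1]
    congr 1
    simp [M, Module.finrank_fintype_fun_eq_card]
  rw [← htot, nat_card_eq_sum_fibers bs B hmem]
  -- fiber count
  have hfiber : ∀ D ∈ B, Nat.card {b : Basis ((i : Fin k) × Fin (c i)) F M // bs b = D}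
      = ∏ i, gma (Fintype.card F) (c i) := by
    intro D hD
    obtain ⟨-, hind, hsup, hrk⟩ := Finset.mem_filter.1 hD
    have hInt : DirectSum.IsInternal D :=
      (DirectSum.isInternal_submodule_iff_iSupIndep_and_iSup_eq_top D).2 ⟨hind, hsup⟩
    have hli : ∀ (b : Basis ((i : Fin k) × Fin (c i)) F M) (i : Fin k),
        LinearIndependent F (fun j : Fin (c i) => b ⟨i, j⟩) :=
      fun b i => b.linearIndependent.comp _ sigma_mk_injective
    have key : ∀ (v : ∀ i, Basis (Fin (c i)) F (D i)), bs (hInt.collectedBasis v) = D := by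
      intro v
      funext i
      have : (fun j : Fin (c i) => hInt.collectedBasis v ⟨i, j⟩)
          = fun j => ((v i j : M)) := by
        funext j; rw [hInt.collectedBasis_coe]
      show span F (Set.range fun j : Fin (c i) => hInt.collectedBasis v ⟨i, j⟩) = D i
      simp only [this]
      have : Set.range (fun j => ((v i j : M))) = (D i).subtype '' Set.range (v i) := by
        rw [← Set.range_comp]; rfl
      rw [this, span_image, (v i).span_eq, Submodule.map_top, range_subtype]
    let e : {b : Basis ((i : Fin k) × Fin (c i)) F M // bs b = D}
        ≃ (∀ i, Basis (Fin (c i)) F (D i)) :=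
      { toFun := fun b => fun i =>
          (Basis.span (hli b.1 i)).map (LinearEquiv.ofEq _ _ (congrFun b.2 i))
        invFun := fun v => ⟨hInt.collectedBasis v, key v⟩
        left_inv := by
          rintro ⟨b, hb⟩
          refine Subtype.ext (Basis.eq_of_apply_eq fun ⟨i, j⟩ => ?_)
          rw [hInt.collectedBasis_coe]
          simp [Basis.span_apply]
        right_inv := by
          intro v
          funext i
          refine Basis.eq_of_apply_eq fun j => Subtype.ext ?_
          simp [Basis.span_apply, hInt.collectedBasis_coe] }
    rw [Nat.card_congr e, Nat.card_pi]
    refine Finset.prod_congr rfl fun i _ => ?_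
    rw [nat_card_basis (by simp [hrk i]), hrk i]
  rw [Finset.sum_congr rfl hfiber, Finset.sum_const, smul_eq_mul]
  congr 1
  rw [Nat.card_eq_fintype_card, Fintype.card_subtype]

lemma card_tuples (n k : ℕ) :
    Nat.card {v : Fin k → Submodule F (Fin n → F) //
        (∀ i, v i ≠ ⊥) ∧ iSupIndep v ∧ iSup v = ⊤}
    = ∑ c ∈ (Finset.Nat.antidiagonalTuple k n).filter (fun c => ∀ i, 0 < c i),
        Nat.card {D : Fin k → Submodule F (Fin n → F) //
          iSupIndep D ∧ iSup D = ⊤ ∧ ∀ i, finrank F (D i) = c i} := by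
  classical
  set M := (Fin n → F)
  have hfinM : Finite (Submodule F M) := Finite.of_injective _ SetLike.coe_injective
  set T := {v : Fin k → Submodule F M // (∀ i, v i ≠ ⊥) ∧ iSupIndep v ∧ iSup v = ⊤}
  set f : T → (Fin k → ℕ) := fun v i => finrank F (v.1 i) with hf
  have hmem : ∀ v : T, f v ∈ (Finset.Nat.antidiagonalTuple k n).filter (fun c => ∀ i, 0 < c i) := by
    rintro ⟨v, h1, h2, h3⟩
    have hInt : DirectSum.IsInternal v :=
      (DirectSum.isInternal_submodule_iff_iSupIndep_and_iSup_eq_top v).2 ⟨h2, h3⟩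
    refine Finset.mem_filter.2 ⟨Finset.Nat.mem_antidiagonalTuple.2 ?_, fun i => ?_⟩
    · show ∑ i, finrank F ↥(v i) = n
      have e := LinearEquiv.ofBijective (DirectSum.coeLinearMap v) hInt
      have h := e.finrank_eq
      rw [finrank_directSum] at h
      rw [h]
      simp [M, Module.finrank_fintype_fun_eq_card]
    · rw [Nat.pos_iff_ne_zero]
      intro h0
      exact h1 i ((Submodule.finrank_eq_zero (R := F)).1 h0)
  rw [nat_card_eq_sum_fibers f _ hmem]
  refine Finset.sum_congr rfl fun c hc => ?_
  obtain ⟨-, hpos⟩ := Finset.mem_filter.1 hc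
  refine Nat.card_congr ⟨fun v => ⟨v.1.1, v.1.2.2.1, v.1.2.2.2, fun i => congrFun v.2 i⟩,
    fun D => ⟨⟨D.1, fun i hbot => ?_, D.2.1, D.2.2.1⟩, funext fun i => D.2.2.2 i⟩,
    fun v => by ext <;> rfl, fun D => by ext <;> rfl⟩
  have := D.2.2.2 i
  rw [hbot, finrank_bot] at this
  exact (hpos i).ne this

lemma tuple_injective {n k : ℕ} (v : Fin k → Submodule F (Fin n → F))
    (h1 : ∀ i, v i ≠ ⊥) (h2 : iSupIndep v) : Function.Injective v := by
  intro i j hij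
  by_contra hne
  refine h1 j ((h2 j).eq_bot_of_le ?_)
  calc v j = v i := hij.symm
  _ ≤ ⨆ l, ⨆ _ : l ≠ j, v l := le_iSup₂ (f := fun l (_ : l ≠ j) => v l) i hne

lemma card_tuples_factorial (n k : ℕ) :
    Nat.card {v : Fin k → Submodule F (Fin n → F) //
        (∀ i, v i ≠ ⊥) ∧ iSupIndep v ∧ iSup v = ⊤}
    = k.factorial * Nat.card {D : Finset (Submodule F (Fin n → F)) //
        ((∀ V ∈ D, V ≠ ⊥) ∧ sSupIndep (D : Set (Submodule F (Fin n → F))) ∧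
          sSup (D : Set (Submodule F (Fin n → F))) = ⊤) ∧ D.card = k} := by
  classical
  set M := (Fin n → F)
  have hfinM : Finite (Submodule F M) := Finite.of_injective _ SetLike.coe_injective
  have hfty : Fintype (Submodule F M) := Fintype.ofFinite _
  set P : Finset (Submodule F M) → Prop := fun D =>
    ((∀ V ∈ D, V ≠ ⊥) ∧ sSupIndep (D : Set (Submodule F M)) ∧
      sSup (D : Set (Submodule F M)) = ⊤) ∧ D.card = k with hP
  set B : Finset (Finset (Submodule F M)) := Finset.univ.filter P with hB
  set T := {v : Fin k → Submodule F M // (∀ i, v i ≠ ⊥) ∧ iSupIndep v ∧ iSup v = ⊤}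
  set f : T → Finset (Submodule F M) := fun v => Finset.image v.1 Finset.univ with hf
  have hmem : ∀ v : T, f v ∈ B := by
    rintro ⟨v, h1, h2, h3⟩
    have hinj := tuple_injective v h1 h2
    refine Finset.mem_filter.2 ⟨Finset.mem_univ _, ⟨fun V hV => ?_, ?_, ?_⟩, ?_⟩
    · obtain ⟨i, -, rfl⟩ := Finset.mem_image.1 hV
      exact h1 i
    · show sSupIndep ((Finset.image v Finset.univ : Finset (Submodule F M)) : Set (Submodule F M))
      rw [Finset.coe_image, Finset.coe_univ, Set.image_univ]
      exact h2.sSupIndep_range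
    · show sSup ((Finset.image v Finset.univ : Finset (Submodule F M)) : Set (Submodule F M)) = ⊤
      rw [Finset.coe_image, Finset.coe_univ, Set.image_univ, sSup_range]
      exact h3
    · show (Finset.image v Finset.univ).card = k
      rw [Finset.card_image_of_injective _ hinj, Finset.card_univ, Fintype.card_fin]
  rw [nat_card_eq_sum_fibers f B hmem]
  have hfiber : ∀ D ∈ B, Nat.card {v : T // f v = D} = k.factorial := by
    intro D hD
    obtain ⟨-, ⟨hbot, hind, hsup⟩, hcard⟩ := Finset.mem_filter.1 hD
    have hDcard : Fintype.card {x // x ∈ D} = k := by rw [Fintype.card_coe, hcard]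
    let e : {v : T // f v = D} ≃ (Fin k ≃ {x // x ∈ D}) :=
      { toFun := fun v => Equiv.ofBijective
          (fun i => (⟨v.1.1 i, by
            have h := Finset.mem_image_of_mem v.1.1 (Finset.mem_univ i)
            rwa [show Finset.image v.1.1 Finset.univ = D from v.2] at h⟩ :
            {x // x ∈ D}))
          ((Fintype.bijective_iff_injective_and_card _).2
            ⟨fun i j hij => tuple_injective v.1.1 v.1.2.1 v.1.2.2.1 (congrArg Subtype.val hij),
             by rw [hDcard, Fintype.card_fin]⟩)
        invFun := fun e => ⟨⟨fun i => (e i : Submodule F M), fun i => hbot _ (e i).2,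
          by
            rw [iSupIndep_def]
            intro i
            refine Disjoint.mono_right ?_ (hind (Finset.mem_coe.2 (e i).2))
            refine iSup₂_le fun j hj => le_sSup ?_
            refine Set.mem_diff_singleton.2 ⟨Finset.mem_coe.2 (e j).2, fun h => hj (e.injective (Subtype.ext h))⟩,
          by
            refine le_antisymm (le_top) (le_trans (le_of_eq hsup.symm) (sSup_le fun b hb => ?_))
            exact le_iSup (fun i => ((e i : {x // x ∈ D}) : Submodule F M)) (e.symm ⟨b, hb⟩) |>.trans_eq'
              (by rw [Equiv.apply_symm_apply])⟩,
          by
            refine Finset.ext fun x => ?_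
            simp only [hf, Finset.mem_image, Finset.mem_univ, true_and]
            constructor
            · rintro ⟨i, rfl⟩; exact (e i).2
            · intro hx; exact ⟨e.symm ⟨x, hx⟩, by rw [Equiv.apply_symm_apply]⟩⟩
        left_inv := fun v => Subtype.ext (Subtype.ext (funext fun i => rfl))
        right_inv := fun e => Equiv.ext fun i => Subtype.ext rfl }
    rw [Nat.card_congr e, Nat.card_eq_fintype_card,
      Fintype.card_equiv (Fintype.equivOfCardEq (by rw [hDcard, Fintype.card_fin])),
      Fintype.card_fin]
  rw [Finset.sum_congr rfl hfiber, Finset.sum_const, smul_eq_mul, Nat.mul_comm]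
  congr 1
  rw [Nat.card_eq_fintype_card, Fintype.card_subtype]

lemma qBell_sum (n : ℕ) (hn : 1 ≤ n) :
    qBell n F = ∑ k ∈ Finset.Icc 1 n,
      Nat.card {D : Finset (Submodule F (Fin n → F)) //
        ((∀ V ∈ D, V ≠ ⊥) ∧ sSupIndep (D : Set (Submodule F (Fin n → F))) ∧
          sSup (D : Set (Submodule F (Fin n → F))) = ⊤) ∧ D.card = k} := by
  classical
  set M := (Fin n → F)
  have hfinM : Finite (Submodule F M) := Finite.of_injective _ SetLike.coe_injective
  have hne : Nonempty (Fin n) := ⟨⟨0, hn⟩⟩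
  set Y := {D : Finset (Submodule F M) //
    (∀ V ∈ D, V ≠ ⊥) ∧ sSupIndep (D : Set (Submodule F M)) ∧ sSup (D : Set (Submodule F M)) = ⊤}
  have hmem : ∀ D : Y, D.1.card ∈ Finset.Icc 1 n := by
    rintro ⟨D, h1, h2, h3⟩
    refine Finset.mem_Icc.2 ⟨?_, ?_⟩
    · rw [Nat.one_le_iff_ne_zero, Ne, Finset.card_eq_zero]
      rintro rfl
      rw [Finset.coe_empty, sSup_empty] at h3
      exact absurd h3 bot_ne_top
    · have hind : iSupIndep (fun i : (D : Set (Submodule F M)) => (i : Submodule F M)) :=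
        (sSupIndep_iff _).1 h2
      have hle := hind.subtype_ne_bot_le_finrank
      rwa [Fintype.card_congr ((Equiv.subtypeUnivEquiv fun i => h1 i.1 (Finset.mem_coe.1 i.2)).trans
          (Equiv.subtypeEquivRight fun x => Finset.mem_coe)),
        Fintype.card_coe, Module.finrank_fintype_fun_eq_card, Fintype.card_fin] at hle
  rw [qBell, nat_card_eq_sum_fibers (fun D : Y => D.1.card) _ hmem]
  refine Finset.sum_congr rfl fun k _ => ?_
  exact Nat.card_congr (Equiv.subtypeSubtypeEquivSubtypeInter
    (fun D : Finset (Submodule F M) => (∀ V ∈ D, V ≠ ⊥) ∧ sSupIndep (D : Set (Submodule F M)) ∧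
      sSup (D : Set (Submodule F M)) = ⊤) (fun D => D.card = k))



/-- `b_q(n) = Σ_{k=1}^n (1/k!) Σ_{n_1+⋯+n_k=n, n_i ≥ 1} γ_n/(γ_{n_1}⋯γ_{n_k})`. -/
theorem qBell_eq (q n : ℕ) (hn : 1 ≤ n)
    (F : Type) [Field F] [Fintype F] (hF : Fintype.card F = q) :
    (qBell n F : ℚ) =
      ∑ k ∈ Finset.Icc 1 n, (1 / k.factorial : ℚ) *
        ∑ c ∈ (Finset.Nat.antidiagonalTuple k n).filter (fun c => ∀ i, 0 < c i),
          (gma q n : ℚ) / ∏ i, (gma q (c i) : ℚ) := by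
  subst hF
  have hq : 1 < Fintype.card F := Fintype.one_lt_card
  have hgma : ∀ m, (0 : ℚ) < gma (Fintype.card F) m := by
    intro m
    rw [gma]
    push_cast [Nat.cast_prod]
    refine Finset.prod_pos fun i hi => ?_
    have : Fintype.card F ^ i < Fintype.card F ^ m :=
      Nat.pow_lt_pow_right hq (Finset.mem_range.1 hi)
    have := Nat.sub_pos_of_lt this
    exact_mod_cast this
  rw [qBell_sum n hn]
  push_cast
  refine Finset.sum_congr rfl fun k hk => ?_
  have hfac : (k.factorial : ℚ) ≠ 0 := Nat.cast_ne_zero.2 k.factorial_ne_zero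
  rw [eq_comm, one_div, inv_mul_eq_iff_eq_mul₀ hfac]
  have := card_tuples_factorial (F := F) n k
  have h2 := card_tuples (F := F) n k
  rw [this] at h2
  have : ((k.factorial * Nat.card {D : Finset (Submodule F (Fin n → F)) //
        ((∀ V ∈ D, V ≠ ⊥) ∧ sSupIndep (D : Set (Submodule F (Fin n → F))) ∧
          sSup (D : Set (Submodule F (Fin n → F))) = ⊤) ∧ D.card = k} : ℕ) : ℚ)
      = ∑ c ∈ (Finset.Nat.antidiagonalTuple k n).filter (fun c => ∀ i, 0 < c i),
          ((Nat.card {D : Fin k → Submodule F (Fin n → F) //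
          iSupIndep D ∧ iSup D = ⊤ ∧ ∀ i, finrank F (D i) = c i} : ℕ) : ℚ) := by
    rw [h2]; push_cast; ring
  push_cast at this
  rw [this]
  refine Finset.sum_congr rfl fun c hc => ?_
  obtain ⟨hc1, -⟩ := Finset.mem_filter.1 hc
  have hsum := Finset.Nat.mem_antidiagonalTuple.1 hc1
  have hcd := card_decomp (F := F) n k c hsum
  have hprod : (∏ i, (gma (Fintype.card F) (c i) : ℚ)) ≠ 0 :=
    Finset.prod_ne_zero_iff.2 fun i _ => (hgma (c i)).ne'
  rw [div_eq_iff hprod, ← hcd]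
  push_cast
  ring
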